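/- Non-uniqueness of the momentum map (Lemma: 'if μ̃ is a momentum map and β ∈ Ω¹_{J̃}(S), then μ̃' := μ̃ + α*β is a momentum map for the action too iff d^{J̃}β = 0 and L_{α(X)}β annihilates T_J S for all X ∈ Γ(A)'): Let V ⊆ Der(A) and Ω be as in the context, let μ : g → A be an ℝ-linear map satisfying the quantization condition and also the prequantization condition for ω, where ω(X,Y) := Ω(α(X), α(Y)), and let β : V → A be an A-linear map (a 1-form along J̃). Define dβ(v, w) := v(β(w)) − w(β(v)) − β([v, w]) for v, w ∈ V, and set μ'(X) := μ(X) + β(α(X)). Then μ' satisfies both the quantization condition and the prequantization condition for the same ω if and only if dβ(α(X), α(Y)) = 0 for all X, Y ∈ g and v(β(α(X))) = 0 for all X ∈ g and v ∈ V. -/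
import Mathlib


/-- **Non-uniqueness of the momentum map.**
If `μ` is a momentum map (quantization and prequantization conditions for
`ω(X,Y) = Ω(α X, α Y)`) and `β` is a 1-form along `J̃`, then
`μ'(X) := μ(X) + β(α X)` is again a momentum map for the same `ω` iff
`dβ(α X, α Y) = 0` for all `X, Y` and `v(β(α X)) = 0` for all `X` and `v ∈ V`. -/
theorem momentum_map_nonuniqueness
    {A : Type*} [CommRing A] [Algebra ℂ A]
    {g : Type*} [LieRing g] [LieAlgebra ℝ g]
    (α : g →ₗ[ℝ] Derivation ℂ A A)
    (hα : ∀ (X Y : g) (a : A), α ⁅X, Y⁆ a = α X (α Y a) - α Y (α X a))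
    (V : Set (Derivation ℂ A A))
    (hVadd : ∀ v ∈ V, ∀ w ∈ V, v + w ∈ V)
    (hVsmul : ∀ (r : ℝ), ∀ v ∈ V, r • v ∈ V)
    (hVlie : ∀ v ∈ V, ∀ w ∈ V, ⁅v, w⁆ ∈ V)
    (hαV : ∀ X : g, α X ∈ V)
    (Ω : Derivation ℂ A A → Derivation ℂ A A → A)
    (hΩalt : ∀ v ∈ V, Ω v v = 0)
    (hΩanti : ∀ v ∈ V, ∀ w ∈ V, Ω v w = - Ω w v)
    (μ : g →ₗ[ℝ] A)
    (hquant : ∀ (X : g), ∀ v ∈ V, v (μ X) = - Ω (α X) v)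
    (hpreq : ∀ X Y : g, μ ⁅X, Y⁆ - α X (μ Y) + α Y (μ X) = - Ω (α X) (α Y))
    (β : Derivation ℂ A A →ₗ[A] A)
    (dβ : Derivation ℂ A A → Derivation ℂ A A → A)
    (hdβ : ∀ v w : Derivation ℂ A A, dβ v w = v (β w) - w (β v) - β ⁅v, w⁆)
    (μ' : g → A)
    (hμ' : ∀ X : g, μ' X = μ X + β (α X)) :
    ((∀ (X : g), ∀ v ∈ V, v (μ' X) = - Ω (α X) v) ∧
     (∀ X Y : g, μ' ⁅X, Y⁆ - α X (μ' Y) + α Y (μ' X) = - Ω (α X) (α Y))) ↔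
    ((∀ X Y : g, dβ (α X) (α Y) = 0) ∧
     (∀ (X : g), ∀ v ∈ V, v (β (α X)) = 0)) := by
  have hcomm : ∀ X Y : g, (α ⁅X, Y⁆ : Derivation ℂ A A) = ⁅α X, α Y⁆ := by
    intro X Y; ext a; simp [hα, Derivation.commutator_apply]
  constructor
  · rintro ⟨hq, hp⟩
    have hβ : ∀ X : g, ∀ v ∈ V, v (β (α X)) = 0 := by
      intro X v hv
      have h1 := hq X v hv
      have h2 := hquant X v hv
      rw [hμ' X, map_add] at h1
      linear_combination h1 - h2
    refine ⟨?_, hβ⟩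
    intro X Y
    have h1 := hp X Y
    have h2 := hpreq X Y
    rw [hμ', hμ', hμ', map_add, map_add] at h1
    rw [hdβ, ← hcomm]
    linear_combination h2 - h1
  · rintro ⟨hd, hβ⟩
    constructor
    · intro X v hv
      rw [hμ' X, map_add, hβ X v hv, add_zero]
      exact hquant X v hv
    · intro X Y
      have h2 := hpreq X Y
      have hd' := hd X Y
      rw [hdβ, ← hcomm] at hd'
      rw [hμ', hμ', hμ', map_add, map_add]
      linear_combination h2 - hd'
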